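/- Let 0 < μ < L and α > 0. For every complex z with μ ≤ Re z and |z − (μ+L)/2| ≤ (L−μ)/2 (the disk with diameter [μ, L] on the real axis), the Möbius image w = (1 − αz)/(1 + αz) satisfies |w| ≤ max{ |1−αμ|/(1+αμ), |1−αL|/(1+αL) }. -/

import Mathlib

set_option maxHeartbeats 1000000 in
theorem srg_stmt15 (μ L α : ℝ) (hμ : 0 < μ) (hμL : μ < L) (hα : 0 < α) :
    ∀ z : ℂ, μ ≤ z.re → ‖z - ((μ + L) / 2 : ℝ)‖ ≤ (L - μ) / 2 →
      ‖(1 - α * z) / (1 + α * z)‖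
        ≤ max (|1 - α * μ| / (1 + α * μ)) (|1 - α * L| / (1 + α * L)) := by
  intro z hx1 hdisk
  set x := z.re with hxdef
  set y := z.im with hydef
  set M := max (|1 - α * μ| / (1 + α * μ)) (|1 - α * L| / (1 + α * L)) with hM
  have hμpos : (0:ℝ) < 1 + α * μ := by positivity
  have hLpos : (0:ℝ) < 1 + α * L := by nlinarith
  -- M ≥ 0
  have hM0 : 0 ≤ M := le_trans (by positivity) (le_max_left _ _)
  -- M ≤ 1
  have hM1 : M ≤ 1 := by
    apply max_le
    · rw [div_le_one hμpos]
      rw [abs_le]; constructor <;> nlinarith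
    · rw [div_le_one hLpos]
      rw [abs_le]; constructor <;> nlinarith
  -- squared endpoint bounds
  have ha2 : (1 - α * μ)^2 ≤ M^2 * (1 + α * μ)^2 := by
    have h : |1 - α * μ| ≤ M * (1 + α * μ) := by
      rw [← div_le_iff₀ hμpos]; exact le_max_left _ _
    calc (1 - α * μ)^2 = |1 - α * μ|^2 := (sq_abs _).symm
      _ ≤ (M * (1 + α * μ))^2 := by
          apply pow_le_pow_left₀ (abs_nonneg _) h
      _ = M^2 * (1 + α * μ)^2 := by ring
  have hb2 : (1 - α * L)^2 ≤ M^2 * (1 + α * L)^2 := by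
    have h : |1 - α * L| ≤ M * (1 + α * L) := by
      rw [← div_le_iff₀ hLpos]; exact le_max_right _ _
    calc (1 - α * L)^2 = |1 - α * L|^2 := (sq_abs _).symm
      _ ≤ (M * (1 + α * L))^2 := by
          apply pow_le_pow_left₀ (abs_nonneg _) h
      _ = M^2 * (1 + α * L)^2 := by ring
  -- disk condition squared
  have hre : (z - ((μ + L) / 2 : ℝ)).re = x - (μ + L) / 2 := by
    simp [Complex.sub_re, hxdef]
  have him : (z - ((μ + L) / 2 : ℝ)).im = y := by
    simp [Complex.sub_im, hydef]
  have hd2 : (x - (μ + L)/2)^2 + y^2 ≤ ((L - μ)/2)^2 := by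
    have h := pow_le_pow_left₀ (norm_nonneg _) hdisk 2
    rw [Complex.sq_norm, Complex.normSq_apply, hre, him] at h
    linarith [h]
  have hr : x^2 + y^2 ≤ (μ + L) * x - μ * L := by nlinarith
  have hx2 : x ≤ L := by
    have h := (Complex.abs_re_le_norm (z - ((μ + L) / 2 : ℝ))).trans hdisk
    rw [hre] at h
    have := (abs_le.mp h).2
    linarith
  -- compute abs of quotient
  have hden : (1 + (α:ℂ) * z) ≠ 0 := by
    intro h
    have : (1 + (α:ℂ) * z).re = 0 := by rw [h]; simp
    simp [Complex.add_re, Complex.mul_re] at this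
    nlinarith
  have habs : ‖(1 - α * z) / (1 + α * z)‖
      = ‖1 - α * z‖ / ‖1 + α * z‖ := norm_div _ _
  rw [habs]
  have hdpos : 0 < ‖1 + α * z‖ := by
    simpa using (norm_pos_iff.mpr hden)
  rw [div_le_iff₀ hdpos]
  apply le_of_pow_le_pow_left₀ (n := 2) (by norm_num)
    (mul_nonneg hM0 (norm_nonneg _))
  have hN : (‖1 - α * z‖)^2 = (1 - α*x)^2 + (α*y)^2 := by
    rw [Complex.sq_norm, Complex.normSq_apply]
    simp [Complex.sub_re, Complex.sub_im, Complex.mul_re, Complex.mul_im]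
    ring
  have hD : (‖1 + α * z‖)^2 = (1 + α*x)^2 + (α*y)^2 := by
    rw [Complex.sq_norm, Complex.normSq_apply]
    simp [Complex.add_re, Complex.add_im, Complex.mul_re, Complex.mul_im]
    ring
  have : (M * ‖1 + α * z‖)^2 = M^2 * ((1 + α*x)^2 + (α*y)^2) := by
    rw [mul_pow, hD]
  rw [hN, this]
  -- final polynomial inequality
  have hM2 : M^2 ≤ 1 := by nlinarith
  have t1 : (1 - M^2) * α^2 * (L - μ) * ((x^2 + y^2) - ((μ + L)*x - μ*L)) ≤ 0 :=
    mul_nonpos_of_nonneg_of_nonpos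
      (mul_nonneg (mul_nonneg (by linarith) (sq_nonneg α)) (by linarith)) (by linarith)
  have t2 : (L - x) * ((1 - α*μ)^2 - M^2*(1 + α*μ)^2) ≤ 0 :=
    mul_nonpos_of_nonneg_of_nonpos (by linarith) (by linarith)
  have t3 : (x - μ) * ((1 - α*L)^2 - M^2*(1 + α*L)^2) ≤ 0 :=
    mul_nonpos_of_nonneg_of_nonpos (by linarith) (by linarith)
  have key : (L - μ) * (((1 - α*x)^2 + (α*y)^2) - M^2*((1 + α*x)^2 + (α*y)^2)) ≤ 0 := by
    linarith [t1, t2, t3]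
  by_contra hcon
  push_neg at hcon
  nlinarith [mul_pos (sub_pos.2 hμL) (sub_pos.2 hcon)]
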